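/- Let p be a prime and R a ring equipped with a filtration u : R → ℤ ∪ {∞} such that u(p·1_R) ≥ 1. Let σ be a ring automorphism of R satisfying u(σ(x) − x) ≥ u(x) + 1 for all x ∈ R. Then for every n ∈ ℕ and every x ∈ R, u(σ^{p^n}(x) − x) ≥ u(x) + n. -/

import Mathlib

private lemma u_sum_2 {R ι : Type*} [Ring R] (u : R → WithTop ℤ)
    (hu0 : u 0 = ⊤) (huadd : ∀ x y : R, min (u x) (u y) ≤ u (x + y))
    (c : WithTop ℤ) (s : Finset ι) (f : ι → R)
    (h : ∀ i ∈ s, c ≤ u (f i)) : c ≤ u (∑ i ∈ s, f i) := by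
  induction s using Finset.cons_induction with
  | empty => simp [hu0]
  | cons a s ha ih =>
    rw [Finset.sum_cons]
    refine le_trans (le_min (h a (Finset.mem_cons_self a s)) ?_) (huadd _ _)
    exact ih fun i hi => h i (Finset.mem_cons_of_mem hi)

private lemma key_2 {R : Type*} [Ring R] (p : ℕ) (u : R → WithTop ℤ)
    (hu0 : u 0 = ⊤)
    (huadd : ∀ x y : R, min (u x) (u y) ≤ u (x + y))
    (humul : ∀ x y : R, u x + u y ≤ u (x * y))
    (hup : 1 ≤ u ((p : R)))
    (τ : R →+* R) (k : WithTop ℤ) (hk : 1 ≤ k)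
    (hτ : ∀ x : R, u x + k ≤ u (τ x - x)) (x : R) :
    u x + (k + 1) ≤ u ((τ ^ p) x - x) := by
  have hk0 : (0 : WithTop ℤ) ≤ k := le_trans zero_le_one hk
  have hτ' : ∀ y : R, u y ≤ u (τ y - y) := fun y =>
    le_trans (le_add_of_nonneg_right hk0) (hτ y)
  -- u y ≤ u (τ^i y)
  have L1 : ∀ i (y : R), u y ≤ u ((τ ^ i) y) := by
    intro i
    induction i with
    | zero => simp
    | succ i ih =>
      intro y
      have h1 : u ((τ ^ i) y) ≤ u (τ ((τ ^ i) y)) := by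
        have h2 := huadd (τ ((τ ^ i) y) - (τ ^ i) y) ((τ ^ i) y)
        rw [sub_add_cancel] at h2
        exact le_trans (le_min (hτ' _) le_rfl) h2
      calc u y ≤ u ((τ ^ i) y) := ih y
        _ ≤ u (τ ((τ ^ i) y)) := h1
        _ = u ((τ ^ (i + 1)) y) := by rw [pow_succ']; rfl
  -- u y + k ≤ u (τ^i y - y)
  have L2 : ∀ i (y : R), u y + k ≤ u ((τ ^ i) y - y) := by
    intro i
    induction i with
    | zero => intro y; simp [hu0]
    | succ i ih =>
      intro y
      have hsplit : (τ ^ (i + 1)) y - y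
          = (τ ((τ ^ i) y) - (τ ^ i) y) + ((τ ^ i) y - y) := by
        rw [pow_succ']
        show τ ((τ ^ i) y) - y = _
        abel
      rw [hsplit]
      refine le_trans (le_min ?_ (ih y)) (huadd _ _)
      exact le_trans (add_le_add_left (L1 i y) k) (hτ _)
  -- telescoping identity
  have T : ∀ m (y : R), (τ ^ m) y - y
      = m • (τ y - y) + ∑ i ∈ Finset.range m,
          (τ ((τ ^ i) y - y) - ((τ ^ i) y - y)) := by
    intro m y
    induction m with
    | zero => simp
    | succ m ih =>
      have hstep : (τ ^ (m + 1)) y - y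
          = ((τ ^ m) y - y) + (τ ((τ ^ m) y) - (τ ^ m) y) := by
        rw [pow_succ']
        show τ ((τ ^ m) y) - y = _
        abel
      rw [hstep, ih, Finset.sum_range_succ, succ_nsmul, map_sub]
      abel
  rw [T p x]
  refine le_trans (le_min ?_ ?_) (huadd _ _)
  · -- p • (τ x - x)
    rw [nsmul_eq_mul]
    refine le_trans ?_ (humul ((p : ℕ) : R) (τ x - x))
    calc u x + (k + 1) = 1 + (u x + k) := by
          rw [add_comm (1 : WithTop ℤ) (u x + k), add_assoc]
      _ ≤ u ((p : R)) + u (τ x - x) := add_le_add hup (hτ x)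
  · refine u_sum_2 u hu0 huadd _ _ _ ?_
    intro i _
    refine le_trans ?_ (hτ ((τ ^ i) x - x))
    have h3 : u x + (k + 1) ≤ u x + (k + k) := by
      rw [← add_assoc, ← add_assoc]
      exact add_le_add_right hk _
    refine le_trans h3 ?_
    rw [← add_assoc]
    exact add_le_add_left (L2 i x) k

/-- If `u` is a ring filtration with `u(p·1) ≥ 1` and `σ` is a ring automorphism with
`u(σ(x) − x) ≥ u(x) + 1` for all `x`, then `u(σ^{p^n}(x) − x) ≥ u(x) + n`. -/
theorem stmt_2 {R : Type*} [Ring R] (p : ℕ) (hp : p.Prime)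
    (u : R → WithTop ℤ)
    (hu0 : u 0 = ⊤)
    (huadd : ∀ x y : R, min (u x) (u y) ≤ u (x + y))
    (humul : ∀ x y : R, u x + u y ≤ u (x * y))
    (hup : 1 ≤ u ((p : R)))
    (σ : R →+* R) (hσ : Function.Bijective σ)
    (hcompat : ∀ x : R, u x + 1 ≤ u (σ x - x))
    (n : ℕ) (x : R) :
    u x + (n : WithTop ℤ) ≤ u ((⇑σ)^[p ^ n] x - x) := by
  have H : ∀ (m : ℕ) (y : R),
      u y + (((m : ℤ) : WithTop ℤ) + 1) ≤ u ((σ ^ (p ^ m)) y - y) := by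
    intro m
    induction m with
    | zero => intro y; simpa using hcompat y
    | succ m ih =>
      intro y
      have h1 : (1 : WithTop ℤ) ≤ ((m : ℤ) : WithTop ℤ) + 1 := by
        refine le_add_of_nonneg_left ?_
        exact_mod_cast Int.natCast_nonneg m
      have h2 := key_2 p u hu0 huadd humul hup (σ ^ (p ^ m))
        (((m : ℤ) : WithTop ℤ) + 1) h1 ih y
      rw [← pow_mul, ← pow_succ] at h2
      refine le_trans (le_of_eq ?_) h2
      congr 1
  have h4 := H n x
  rw [← RingHom.coe_pow]
  refine le_trans ?_ h4
  refine add_le_add_right ?_ _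
  have : ((n : ℕ) : WithTop ℤ) = (((n : ℤ)) : WithTop ℤ) := by push_cast; rfl
  rw [this]
  exact le_add_of_nonneg_right zero_le_one
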